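/- arXiv:2506.20239 — 4 statements merged into one kernel-verified Lean document; each statement's English description precedes it below -/
import Mathlib

section
/- For any f ∈ L^∞(E,μ) ∩ L^1(E,μ) and any h₁, h₂ > 0, one has | |f|_{h₁} − |f|_{h₂} | ≤ |f|_{h₁ ∧ h₂} · |h₁ − h₂| / (h₁ ∨ h₂). -/
open MeasureTheory

/-- The semi-norm `|f|_h = sup_{C ∈ 𝒞} |∫_C f dμ| / (μ(C) + h)`. -/
noncomputable def normH {E : Type*} [MeasurableSpace E] (μ : Measure E)
    (𝒞 : Set (Set E)) (f : E → ℝ) (h : ℝ) : ℝ :=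
  ⨆ C : 𝒞, |∫ x in (C : Set E), f x ∂μ| / ((μ (C : Set E)).toReal + h)

lemma normH_bdd {E : Type*} [MeasurableSpace E] (μ : Measure E)
    (𝒞 : Set (Set E)) (f : E → ℝ) (h : ℝ) (hh : 0 < h)
    (hf1 : Integrable f μ) :
    BddAbove (Set.range fun C : 𝒞 =>
      |∫ x in (C : Set E), f x ∂μ| / ((μ (C : Set E)).toReal + h)) := by
  refine ⟨(∫ x, |f x| ∂μ) / h, ?_⟩
  rintro _ ⟨C, rfl⟩
  have h1 : |∫ x in (C : Set E), f x ∂μ| ≤ ∫ x, |f x| ∂μ := by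
    calc |∫ x in (C : Set E), f x ∂μ| ≤ ∫ x in (C : Set E), |f x| ∂μ :=
          (by simpa using norm_integral_le_integral_norm (μ := μ.restrict (C : Set E)) f)
      _ ≤ ∫ x, |f x| ∂μ := setIntegral_le_integral hf1.abs
          (Filter.Eventually.of_forall fun x => abs_nonneg _)
  have h2 : h ≤ (μ (C : Set E)).toReal + h := le_add_of_nonneg_left ENNReal.toReal_nonneg
  exact div_le_div₀ (le_trans (abs_nonneg _) h1) h1 hh h2

lemma normH_aux {E : Type*} [MeasurableSpace E] (μ : Measure E)
    (𝒞 : Set (Set E)) (f : E → ℝ) (h h' : ℝ) (hh : 0 < h) (hle : h ≤ h')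
    (hf1 : Integrable f μ) :
    |normH μ 𝒞 f h - normH μ 𝒞 f h'| ≤ normH μ 𝒞 f h * (h' - h) / h' := by
  have hh' : 0 < h' := lt_of_lt_of_le hh hle
  have bdd := normH_bdd μ 𝒞 f h hh hf1
  have bdd' := normH_bdd μ 𝒞 f h' hh' hf1
  have nn : 0 ≤ normH μ 𝒞 f h :=
    Real.iSup_nonneg fun C => div_nonneg (abs_nonneg _)
      (add_nonneg ENNReal.toReal_nonneg hh.le)
  have nn' : 0 ≤ normH μ 𝒞 f h' :=
    Real.iSup_nonneg fun C => div_nonneg (abs_nonneg _)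
      (add_nonneg ENNReal.toReal_nonneg hh'.le)
  have mono : normH μ 𝒞 f h' ≤ normH μ 𝒞 f h := by
    refine Real.iSup_le (fun C => le_trans ?_ (le_ciSup bdd C)) nn
    have hm : (0:ℝ) ≤ (μ (C : Set E)).toReal := ENNReal.toReal_nonneg
    gcongr
  have key : normH μ 𝒞 f h ≤ normH μ 𝒞 f h' + normH μ 𝒞 f h * ((h' - h) / h') := by
    have hr : 0 ≤ (h' - h) / h' := div_nonneg (by linarith) hh'.le
    refine Real.iSup_le (fun C => ?_) (by positivity)
    set a := |∫ x in (C : Set E), f x ∂μ| with ha_def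
    set m := (μ (C : Set E)).toReal with hm_def
    have hm : 0 ≤ m := ENNReal.toReal_nonneg
    have ha : 0 ≤ a := abs_nonneg _
    have t1 : a / (m + h') ≤ normH μ 𝒞 f h' := le_ciSup bdd' C
    have t2 : a / (m + h) ≤ normH μ 𝒞 f h := le_ciSup bdd C
    have t3 : a / (m + h) * (h / h') ≤ a / (m + h') := by
      rw [div_mul_div_comm, div_le_div_iff₀ (by positivity) (by positivity)]
      nlinarith [mul_nonneg ha hm]
    have e : a / (m + h) = a / (m + h) * (h / h') + a / (m + h) * ((h' - h) / h') := by
      field_simp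
      ring
    calc a / (m + h) = a / (m + h) * (h / h') + a / (m + h) * ((h' - h) / h') := e
      _ ≤ normH μ 𝒞 f h' + normH μ 𝒞 f h * ((h' - h) / h') :=
          add_le_add (t3.trans t1) (mul_le_mul_of_nonneg_right t2 hr)
  rw [abs_of_nonneg (by linarith), mul_div_assoc]
  linarith

theorem normH_lipschitz_in_h {E : Type*} [MeasurableSpace E] (μ : Measure E)
    [SigmaFinite μ] (𝒞 : Set (Set E)) (f : E → ℝ) (h₁ h₂ : ℝ)
    (hh₁ : 0 < h₁) (hh₂ : 0 < h₂)
    (hf1 : Integrable f μ) (hfi : MemLp f ⊤ μ)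
    (h𝒞 : ∀ C ∈ 𝒞, μ C < ⊤) :
    |normH μ 𝒞 f h₁ - normH μ 𝒞 f h₂| ≤
      normH μ 𝒞 f (min h₁ h₂) * |h₁ - h₂| / max h₁ h₂ := by
  rcases le_total h₁ h₂ with H | H
  · rw [min_eq_left H, max_eq_right H, abs_of_nonpos (show h₁ - h₂ ≤ 0 by linarith), neg_sub]
    exact normH_aux μ 𝒞 f h₁ h₂ hh₁ H hf1
  · rw [min_eq_right H, max_eq_left H, abs_of_nonneg (show 0 ≤ h₁ - h₂ by linarith), abs_sub_comm]
    exact normH_aux μ 𝒞 f h₂ h₁ hh₂ H hf1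
end

section
/- For any model m and any h₁, h₂ > 0, |κ_m(h₁) − κ_m(h₂)| ≤ (1 − (h₁ ∧ h₂)/(h₁ ∨ h₂)) · κ_m(h₁ ∧ h₂); in particular κ_m is continuous on (0,∞). -/
open MeasureTheory

/-- `κ_m(h) = inf_{p,q ∈ m, ‖p-q‖_∞ > 0} |p-q|_h / ‖p-q‖_∞`. -/
noncomputable def kappa {E : Type*} [MeasurableSpace E] (μ : Measure E)
    (𝒞 : Set (Set E)) (m : Set (E → ℝ)) (h : ℝ) : ℝ :=
  sInf {x : ℝ | ∃ p ∈ m, ∃ q ∈ m, 0 < (eLpNorm (p - q) ⊤ μ).toReal ∧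
    x = normH μ 𝒞 (p - q) h / (eLpNorm (p - q) ⊤ μ).toReal}

section Aux

variable {E : Type*} [MeasurableSpace E] (μ : Measure E) (𝒞 : Set (Set E))

lemma normH_nonneg (f : E → ℝ) (h : ℝ) (hh : 0 < h) : 0 ≤ normH μ 𝒞 f h := by
  apply Real.iSup_nonneg
  intro C
  exact div_nonneg (abs_nonneg _) (by positivity)

lemma normH_bddAbove (f : E → ℝ) (hf : Integrable f μ) (h : ℝ) (hh : 0 < h) :
    BddAbove (Set.range fun C : 𝒞 =>
      |∫ x in (C : Set E), f x ∂μ| / ((μ (C : Set E)).toReal + h)) := by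
  refine ⟨(∫ x, |f x| ∂μ) / h, ?_⟩
  rintro _ ⟨C, rfl⟩
  have h1 : |∫ x in (C : Set E), f x ∂μ| ≤ ∫ x in (C : Set E), |f x| ∂μ := by
    simpa [Real.norm_eq_abs] using
      norm_integral_le_integral_norm (μ := μ.restrict (C : Set E)) f
  have h2 : ∫ x in (C : Set E), |f x| ∂μ ≤ ∫ x, |f x| ∂μ :=
    integral_mono_measure Measure.restrict_le_self
      (Filter.Eventually.of_forall fun x => abs_nonneg _) hf.abs
  exact div_le_div₀ (le_trans (abs_nonneg _) (h1.trans h2)) (h1.trans h2) hh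
    (le_add_of_nonneg_left ENNReal.toReal_nonneg)

lemma normH_anti (f : E → ℝ) (hf : Integrable f μ) {h h' : ℝ} (hh : 0 < h) (hle : h ≤ h') :
    normH μ 𝒞 f h' ≤ normH μ 𝒞 f h := by
  rcases isEmpty_or_nonempty 𝒞 with hE | hE
  · unfold normH
    rw [iSup_of_empty', iSup_of_empty']
  · apply ciSup_le
    intro C
    refine le_trans ?_ (le_ciSup (normH_bddAbove μ 𝒞 f hf h hh) C)
    exact div_le_div_of_nonneg_left (abs_nonneg _) (by positivity)
      (by linarith)

lemma normH_lower (f : E → ℝ) (hf : Integrable f μ) {h h' : ℝ} (hh : 0 < h) (hle : h ≤ h') :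
    normH μ 𝒞 f h ≤ h' / h * normH μ 𝒞 f h' := by
  have hh' : 0 < h' := hh.trans_le hle
  rcases isEmpty_or_nonempty 𝒞 with hE | hE
  · unfold normH
    rw [iSup_of_empty', iSup_of_empty']
    simp [Real.sSup_empty]
  · apply ciSup_le
    intro C
    set t := (μ (C : Set E)).toReal with ht
    have ht0 : 0 ≤ t := ENNReal.toReal_nonneg
    set A := |∫ x in (C : Set E), f x ∂μ| with hA
    have hA0 : 0 ≤ A := abs_nonneg _
    have step1 : A / (t + h) ≤ h' / h * (A / (t + h')) := by
      rw [div_mul_div_comm, div_le_div_iff₀ (by positivity) (by positivity)]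
      nlinarith [mul_nonneg (mul_nonneg hA0 ht0) (by linarith : (0:ℝ) ≤ h' - h)]
    refine step1.trans ?_
    exact mul_le_mul_of_nonneg_left
      (le_ciSup (normH_bddAbove μ 𝒞 f hf h' hh') C) (by positivity)

variable (m : Set (E → ℝ))

lemma kappa_bddBelow (h : ℝ) (hh : 0 < h) :
    BddBelow {x : ℝ | ∃ p ∈ m, ∃ q ∈ m, 0 < (eLpNorm (p - q) ⊤ μ).toReal ∧
      x = normH μ 𝒞 (p - q) h / (eLpNorm (p - q) ⊤ μ).toReal} := by
  refine ⟨0, ?_⟩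
  rintro x ⟨p, hp, q, hq, hpos, rfl⟩
  exact div_nonneg (normH_nonneg μ 𝒞 _ h hh) hpos.le

lemma kappa_nonneg (h : ℝ) (hh : 0 < h) : 0 ≤ kappa μ 𝒞 m h := by
  apply Real.sInf_nonneg
  rintro x ⟨p, hp, q, hq, hpos, rfl⟩
  exact div_nonneg (normH_nonneg μ 𝒞 _ h hh) hpos.le

lemma kappa_anti (hm : ∀ f ∈ m, Integrable f μ) {h h' : ℝ} (hh : 0 < h) (hle : h ≤ h') :
    kappa μ 𝒞 m h' ≤ kappa μ 𝒞 m h := by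
  by_cases hP : ∃ p ∈ m, ∃ q ∈ m, 0 < (eLpNorm (p - q) ⊤ μ).toReal
  · obtain ⟨p, hp, q, hq, hpos⟩ := hP
    refine le_csInf ⟨normH μ 𝒞 (p - q) h / (eLpNorm (p - q) ⊤ μ).toReal,
      ⟨p, hp, q, hq, hpos, rfl⟩⟩ ?_
    rintro x ⟨p', hp', q', hq', hpos', rfl⟩
    refine le_trans (csInf_le (kappa_bddBelow μ 𝒞 m h' (hh.trans_le hle))
      ⟨p', hp', q', hq', hpos', rfl⟩) ?_
    gcongr
    exact normH_anti μ 𝒞 _ ((hm p' hp').sub (hm q' hq')) hh hle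
  · have he : ∀ h'' : ℝ, {x : ℝ | ∃ p ∈ m, ∃ q ∈ m, 0 < (eLpNorm (p - q) ⊤ μ).toReal ∧
        x = normH μ 𝒞 (p - q) h'' / (eLpNorm (p - q) ⊤ μ).toReal} = ∅ := by
      intro h''
      ext x
      simp only [Set.mem_setOf_eq, Set.mem_empty_iff_false, iff_false]
      rintro ⟨p, hp, q, hq, hpos, rfl⟩
      exact hP ⟨p, hp, q, hq, hpos⟩
    unfold kappa
    rw [he h, he h', Real.sInf_empty]

lemma kappa_lower (hm : ∀ f ∈ m, Integrable f μ) {h h' : ℝ} (hh : 0 < h) (hle : h ≤ h') :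
    h / h' * kappa μ 𝒞 m h ≤ kappa μ 𝒞 m h' := by
  have hh' : 0 < h' := hh.trans_le hle
  by_cases hP : ∃ p ∈ m, ∃ q ∈ m, 0 < (eLpNorm (p - q) ⊤ μ).toReal
  · obtain ⟨p, hp, q, hq, hpos⟩ := hP
    refine le_csInf ⟨normH μ 𝒞 (p - q) h' / (eLpNorm (p - q) ⊤ μ).toReal,
      ⟨p, hp, q, hq, hpos, rfl⟩⟩ ?_
    rintro y ⟨p', hp', q', hq', hpos', rfl⟩
    set N := (eLpNorm (p' - q') ⊤ μ).toReal
    have h1 : kappa μ 𝒞 m h ≤ normH μ 𝒞 (p' - q') h / N :=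
      csInf_le (kappa_bddBelow μ 𝒞 m h hh) ⟨p', hp', q', hq', hpos', rfl⟩
    have h2 : normH μ 𝒞 (p' - q') h ≤ h' / h * normH μ 𝒞 (p' - q') h' :=
      normH_lower μ 𝒞 _ ((hm p' hp').sub (hm q' hq')) hh hle
    have h3 : h / h' * kappa μ 𝒞 m h ≤ h / h' * (normH μ 𝒞 (p' - q') h / N) :=
      mul_le_mul_of_nonneg_left h1 (by positivity)
    refine h3.trans ?_
    rw [← mul_div_assoc]
    gcongr
    calc h / h' * normH μ 𝒞 (p' - q') h ≤ h / h' * (h' / h * normH μ 𝒞 (p' - q') h') :=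
          mul_le_mul_of_nonneg_left h2 (by positivity)
      _ = normH μ 𝒞 (p' - q') h' := by field_simp
  · have he : ∀ h'' : ℝ, {x : ℝ | ∃ p ∈ m, ∃ q ∈ m, 0 < (eLpNorm (p - q) ⊤ μ).toReal ∧
        x = normH μ 𝒞 (p - q) h'' / (eLpNorm (p - q) ⊤ μ).toReal} = ∅ := by
      intro h''
      ext x
      simp only [Set.mem_setOf_eq, Set.mem_empty_iff_false, iff_false]
      rintro ⟨p, hp, q, hq, hpos, rfl⟩
      exact hP ⟨p, hp, q, hq, hpos⟩
    unfold kappa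
    rw [he h, he h', Real.sInf_empty, mul_zero]

end Aux

theorem kappa_lipschitz_and_continuous {E : Type*} [MeasurableSpace E] (μ : Measure E)
    [SigmaFinite μ] (𝒞 : Set (Set E)) (m : Set (E → ℝ))
    (hm : ∀ f ∈ m, Integrable f μ ∧ MemLp f ⊤ μ)
    (h𝒞 : ∀ C ∈ 𝒞, μ C < ⊤) :
    (∀ h₁ h₂ : ℝ, 0 < h₁ → 0 < h₂ →
      |kappa μ 𝒞 m h₁ - kappa μ 𝒞 m h₂| ≤
        (1 - min h₁ h₂ / max h₁ h₂) * kappa μ 𝒞 m (min h₁ h₂)) ∧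
    ContinuousOn (kappa μ 𝒞 m) (Set.Ioi (0 : ℝ)) := by
  have hmI : ∀ f ∈ m, Integrable f μ := fun f hf => (hm f hf).1
  have key : ∀ h₁ h₂ : ℝ, 0 < h₁ → 0 < h₂ →
      |kappa μ 𝒞 m h₁ - kappa μ 𝒞 m h₂| ≤
        (1 - min h₁ h₂ / max h₁ h₂) * kappa μ 𝒞 m (min h₁ h₂) := by
    have base : ∀ a b : ℝ, 0 < a → a ≤ b →
        |kappa μ 𝒞 m a - kappa μ 𝒞 m b| ≤ (1 - a / b) * kappa μ 𝒞 m a := by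
      intro a b ha hab
      have h1 := kappa_anti μ 𝒞 m hmI ha hab
      have h2 := kappa_lower μ 𝒞 m hmI ha hab
      rw [abs_of_nonneg (by linarith)]
      have : (1 - a / b) * kappa μ 𝒞 m a = kappa μ 𝒞 m a - a / b * kappa μ 𝒞 m a := by ring
      linarith
    intro h₁ h₂ hh₁ hh₂
    rcases le_total h₁ h₂ with hle | hle
    · rw [min_eq_left hle, max_eq_right hle]
      exact base h₁ h₂ hh₁ hle
    · rw [min_eq_right hle, max_eq_left hle, abs_sub_comm]
      exact base h₂ h₁ hh₂ hle
  refine ⟨key, ?_⟩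
  rw [Metric.continuousOn_iff]
  intro b hb ε hε
  rw [Set.mem_Ioi] at hb
  set Cb := kappa μ 𝒞 m (b / 2) with hCb
  have hCb0 : 0 ≤ Cb := kappa_nonneg μ 𝒞 m (b / 2) (by linarith)
  set u := 2 * Cb / b with hu
  have hu0 : 0 ≤ u := by positivity
  refine ⟨min (b / 2) (ε / (u + 1)), by positivity, ?_⟩
  intro a ha hdist
  rw [Set.mem_Ioi] at ha
  rw [Real.dist_eq] at hdist ⊢
  have hd1 : |a - b| < b / 2 := lt_of_lt_of_le hdist (min_le_left _ _)
  have hd2 : |a - b| < ε / (u + 1) := lt_of_lt_of_le hdist (min_le_right _ _)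
  have habs := abs_lt.mp hd1
  have hmin : b / 2 ≤ min a b := le_min (by linarith) (by linarith)
  have hminpos : (0:ℝ) < min a b := lt_of_lt_of_le (by linarith) hmin
  have hmaxpos : (0:ℝ) < max a b := lt_of_lt_of_le hminpos (min_le_max)
  have hkm : kappa μ 𝒞 m (min a b) ≤ Cb :=
    kappa_anti μ 𝒞 m hmI (by linarith) hmin
  have hfac : 0 ≤ 1 - min a b / max a b := by
    rw [sub_nonneg]
    exact div_le_one_of_le₀ (min_le_max) hmaxpos.le
  have step1 : |kappa μ 𝒞 m a - kappa μ 𝒞 m b| ≤ (1 - min a b / max a b) * Cb :=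
    (key a b ha hb).trans (mul_le_mul_of_nonneg_left hkm hfac)
  have hms : max a b - min a b = |a - b| := by
    rcases le_total a b with h | h
    · rw [max_eq_right h, min_eq_left h, abs_sub_comm, abs_of_nonneg (by linarith)]
    · rw [max_eq_left h, min_eq_right h, abs_of_nonneg (by linarith)]
  have step2 : (1 - min a b / max a b) * Cb ≤ 2 * |a - b| * Cb / b := by
    have h1 : 1 - min a b / max a b = |a - b| / max a b := by
      rw [← hms]
      field_simp
    rw [h1]
    rw [div_mul_eq_mul_div, div_le_div_iff₀ hmaxpos (by linarith)]
    have hbm : b ≤ max a b := le_max_right a b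
    nlinarith [mul_nonneg (abs_nonneg (a - b)) hCb0]
  have step3 : 2 * |a - b| * Cb / b < ε := by
    have hab0 : 0 ≤ |a - b| := abs_nonneg _
    have h4 : |a - b| * (u + 1) < ε := by
      rw [← lt_div_iff₀ (by positivity)]
      exact hd2
    have h5 : 2 * |a - b| * Cb / b = |a - b| * u := by
      rw [hu]; field_simp
    rw [h5]
    nlinarith
  linarith
end

section
/- For any ε ∈ [0,1), h > 0, model m, and any p̄ ∈ m: if the hun-estimator p̂ ∈ m satisfies T_m(X, p̂) ≤ inf_{p∈m} T_m(X,p) + δ, where T_m(X,p) = sup_{q∈m} T(X,p,q) and |T(X,p,q) − Δ(p,q)| ≤ Z for all p,q ∈ m, and where |p−p*|_h ≥ Δ(p,q) ≥ (1−ε)|p−q|_h − |q−p*|_h for all p,q ∈ m, then (1−ε)|p̄ − p̂|_h ≤ 2|p* − p̄|_h + 2Z + δ. -/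
theorem hun_estimator_basic_oracle {V : Type*} [AddCommGroup V]
    (m : Set V) (hmc : m.Countable) (hmne : m.Nonempty)
    (Nh : V → ℝ) (hNh_nonneg : ∀ v, 0 ≤ Nh v) (hNh_symm : ∀ v, Nh (-v) = Nh v)
    (pstar : V) (ε : ℝ) (hε0 : 0 ≤ ε) (hε1 : ε < 1)
    (T Δ : V → V → ℝ) (Z : ℝ) (hZ : 0 ≤ Z) (δ : ℝ) (hδ : 0 < δ)
    -- uniform deviation bound between the random tests and their means
    (hdev : ∀ p ∈ m, ∀ q ∈ m, |T p q - Δ p q| ≤ Z)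
    -- upper and lower bounds on the mean tests
    (hΔub : ∀ p ∈ m, ∀ q ∈ m, Δ p q ≤ Nh (p - pstar))
    (hΔlb : ∀ p ∈ m, ∀ q ∈ m, (1 - ε) * Nh (p - q) - Nh (q - pstar) ≤ Δ p q)
    (Tm : V → ℝ) (hTm : Tm = fun p => ⨆ q : m, T p (q : V))
    (phat : V) (hphat : phat ∈ m)
    -- `phat` is a `δ`-minimizer of `Tm` over `m`
    (hmin : ∀ p ∈ m, Tm phat ≤ Tm p + δ) :
    ∀ pbar ∈ m, (1 - ε) * Nh (pbar - phat) ≤ 2 * Nh (pstar - pbar) + 2 * Z + δ := by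
  intro pbar hpbar
  haveI : Nonempty m := hmne.to_subtype
  have hsymm : Nh (pbar - pstar) = Nh (pstar - pbar) := by
    rw [← hNh_symm (pstar - pbar), neg_sub]
  have hsymm2 : Nh (pbar - phat) = Nh (phat - pbar) := by
    rw [← hNh_symm (phat - pbar), neg_sub]
  have hbdd : BddAbove (Set.range fun q : m => T phat (q : V)) := by
    refine ⟨Nh (phat - pstar) + Z, ?_⟩
    rintro x ⟨q, rfl⟩
    have h1 := abs_le.mp (hdev phat hphat q q.2)
    have h2 := hΔub phat hphat q q.2
    simp only
    linarith [h1.2]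
  have key1 : T phat pbar ≤ Tm phat := by
    rw [hTm]
    exact le_ciSup hbdd ⟨pbar, hpbar⟩
  have key2 : Tm pbar ≤ Nh (pbar - pstar) + Z := by
    rw [hTm]
    refine ciSup_le fun q => ?_
    have h1 := abs_le.mp (hdev pbar hpbar q q.2)
    have h2 := hΔub pbar hpbar q q.2
    linarith [h1.2]
  rw [hsymm2]
  have h3 := abs_le.mp (hdev phat hphat pbar hpbar)
  have h4 := hΔlb phat hphat pbar hpbar
  have h5 := hmin pbar hpbar
  linarith [h3.1]
end

section
/- The dimension of the space of d-variate polynomials of total degree at most r satisfies binom(r+d, d) ≥ min(e^{r/2}, 4^d/(2d+1)). -/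
lemma two_pow_le_centralBinom (n : ℕ) : 2 ^ n ≤ Nat.centralBinom n := by
  induction n with
  | zero => simp [Nat.centralBinom_zero]
  | succ n ih =>
      have key := Nat.succ_mul_centralBinom_succ n
      have h1 : (n + 1) * (2 * Nat.centralBinom n) ≤ (n + 1) * Nat.centralBinom (n + 1) := by
        rw [key]
        have : (n + 1) * (2 * Nat.centralBinom n) = 2 * (n + 1) * Nat.centralBinom n := by ring
        rw [this]
        exact Nat.mul_le_mul_right _ (by omega)
      have h2 : 2 * Nat.centralBinom n ≤ Nat.centralBinom (n + 1) :=
        Nat.le_of_mul_le_mul_left h1 (Nat.succ_pos n)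
      calc 2 ^ (n + 1) = 2 * 2 ^ n := by ring
        _ ≤ 2 * Nat.centralBinom n := Nat.mul_le_mul_left _ ih
        _ ≤ Nat.centralBinom (n + 1) := h2

theorem choose_ge_min_exp_pow (r d : ℕ) (hr : 0 < r) (hd : 0 < d) :
    min (Real.exp (r / 2)) (4 ^ d / (2 * d + 1)) ≤ ((r + d).choose d : ℝ) := by
  rcases le_total r d with h | h
  · -- use exp branch: exp(r/2) ≤ 2^r ≤ C(2r,r) ≤ C(r+d,r) = C(r+d,d)
    refine le_trans (min_le_left _ _) ?_
    have hlog : (1:ℝ)/2 ≤ Real.log 2 := by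
      have := Real.log_two_gt_d9
      linarith
    have hexp : Real.exp (r / 2) ≤ (2:ℝ) ^ r := by
      have : (r:ℝ) / 2 ≤ Real.log ((2:ℝ) ^ r) := by
        rw [Real.log_pow]
        have : (r:ℝ) * (1/2) ≤ (r:ℝ) * Real.log 2 :=
          mul_le_mul_of_nonneg_left hlog (Nat.cast_nonneg r)
        linarith
      calc Real.exp (r / 2) ≤ Real.exp (Real.log ((2:ℝ) ^ r)) := Real.exp_le_exp.mpr this
        _ = (2:ℝ) ^ r := Real.exp_log (by positivity)
    have hnat : 2 ^ r ≤ (r + d).choose d := by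
      have h1 : 2 ^ r ≤ Nat.centralBinom r := two_pow_le_centralBinom r
      have h2 : Nat.centralBinom r ≤ (r + d).choose r := by
        rw [Nat.centralBinom]
        exact Nat.choose_le_choose r (by omega)
      have h3 : (r + d).choose r = (r + d).choose d := by
        rw [← Nat.choose_symm (by omega : r ≤ r + d)]
        congr 1
        omega
      omega
    calc Real.exp (r / 2) ≤ (2:ℝ) ^ r := hexp
      _ ≤ ((r + d).choose d : ℝ) := by exact_mod_cast hnat
  · -- use 4^d/(2d+1) branch
    refine le_trans (min_le_right _ _) ?_
    have h1 : 4 ^ d ≤ (2 * d + 1) * Nat.centralBinom d := by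
      calc 4 ^ d ≤ 2 * d * Nat.centralBinom d :=
            Nat.four_pow_le_two_mul_self_mul_centralBinom d hd
        _ ≤ (2 * d + 1) * Nat.centralBinom d := Nat.mul_le_mul_right _ (by omega)
    have h2 : Nat.centralBinom d ≤ (r + d).choose d := by
      rw [Nat.centralBinom]
      exact Nat.choose_le_choose d (by omega)
    have h3 : (4:ℝ) ^ d ≤ (2 * d + 1) * ((r + d).choose d : ℝ) := by
      have : 4 ^ d ≤ (2 * d + 1) * (r + d).choose d :=
        le_trans h1 (Nat.mul_le_mul_left _ h2)
      exact_mod_cast this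
    rw [div_le_iff₀ (by positivity)]
    linarith
end
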